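/- Let G be a RAN whose clique-tree T contains two vertices q_i, q_j of degree 4 joined by a neat path that is a fat path (either q_i and q_j are adjacent, or all internal vertices of the path have degree exactly 3 in T). Then τ(G) < 1, and hence G is non-Hamiltonian. -/

import Mathlib

open SimpleGraph ENNReal

namespace RanTough

/-- Number of connected components after deleting the vertex set `S` from `G`. -/
noncomputable def compCount {V : Type*} (G : SimpleGraph V) (S : Finset V) : ℕ :=
  Nat.card (G.induce ((↑S : Set V)ᶜ)).ConnectedComponent

/-- `G` is `t`-tough: `t * ω(G - S) ≤ |S|` whenever deleting `S` disconnects `G`. -/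
def IsTough {V : Type*} (G : SimpleGraph V) (t : ℝ≥0∞) : Prop :=
  ∀ S : Finset V, 1 < compCount G S → t * compCount G S ≤ S.card

/-- The toughness of `G`: the largest `t` such that `G` is `t`-tough
(`⊤` for complete graphs). -/
noncomputable def toughness {V : Type*} (G : SimpleGraph V) : ℝ≥0∞ :=
  sSup {t : ℝ≥0∞ | IsTough G t}

/-- A vertex is simplicial if its neighborhood is a clique. -/
def IsSimplicial {V : Type*} (G : SimpleGraph V) (v : V) : Prop :=
  G.IsClique (G.neighborSet v)

/-- `G` is a `k`-tree: there is a construction ordering starting from a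
`(k+1)`-clique in which each later vertex is attached to a `k`-clique
of earlier vertices. -/
def IsKTree {V : Type*} [Fintype V] (k : ℕ) (G : SimpleGraph V) : Prop :=
  k + 1 ≤ Fintype.card V ∧
  ∃ e : Fin (Fintype.card V) ≃ V,
    (∀ i j : Fin (Fintype.card V), (i : ℕ) < k + 1 → (j : ℕ) < k + 1 → i ≠ j →
      G.Adj (e i) (e j)) ∧
    (∀ i : Fin (Fintype.card V), k + 1 ≤ (i : ℕ) →
      ∃ S : Finset V, S.card = k ∧ G.IsClique (S : Set V) ∧
        ∀ w : V, (G.Adj (e i) w ∧ ∃ j, j < i ∧ e j = w) ↔ w ∈ S)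

/-- `Q` is a maximal clique of `G`. -/
def IsMaximalClique {V : Type*} (G : SimpleGraph V) (Q : Finset V) : Prop :=
  G.IsClique (Q : Set V) ∧ ∀ R : Finset V, G.IsClique (R : Set V) → Q ⊆ R → Q = R

/-- A clique-tree of `G`: a tree on the maximal cliques of `G` satisfying the
induced subtree property. -/
def IsCliqueTree {V : Type*} (G : SimpleGraph V)
    (T : SimpleGraph {Q : Finset V // IsMaximalClique G Q}) : Prop :=
  T.IsTree ∧ ∀ v : V,
    (T.induce {Q : {Q : Finset V // IsMaximalClique G Q} | v ∈ (Q : Finset V)}).Connected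

/-- A Random Apollonian Network: a uniquely representable (unique clique-tree) 3-tree. -/
def IsRAN {V : Type*} [Fintype V] (G : SimpleGraph V) : Prop :=
  IsKTree 3 G ∧ ∃! T : SimpleGraph {Q : Finset V // IsMaximalClique G Q}, IsCliqueTree G T

/-- `S` separates the nonadjacent vertices `u` and `v`. -/
def IsUVSeparator {V : Type*} (G : SimpleGraph V) (u v : V) (S : Finset V) : Prop :=
  u ≠ v ∧ ¬ G.Adj u v ∧ u ∉ S ∧ v ∉ S ∧ ∀ p : G.Walk u v, ∃ w ∈ p.support, w ∈ S

/-- `S` is a minimal vertex separator of `G`. -/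
def IsMinVtxSep {V : Type*} (G : SimpleGraph V) (S : Finset V) : Prop :=
  ∃ u v : V, IsUVSeparator G u v S ∧ ∀ S' : Finset V, S' ⊂ S → ¬ IsUVSeparator G u v S'

/-- The multiplicity of `S` as a minimal vertex separator with respect to
the clique-tree `T`: the number of edges of `T` whose endpoint intersection is `S`. -/
noncomputable def sepMultiplicity {V : Type*} [DecidableEq V] (G : SimpleGraph V)
    (T : SimpleGraph {Q : Finset V // IsMaximalClique G Q}) (S : Finset V) : ℕ :=
  {e ∈ T.edgeSet | ∃ Q Q' : {Q : Finset V // IsMaximalClique G Q},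
    e = s(Q, Q') ∧ (Q : Finset V) ∩ (Q' : Finset V) = S}.ncard

/-- Degree of a vertex in a graph, via `Set.ncard` (no instances needed). -/
noncomputable def deg {α : Type*} (T : SimpleGraph α) (q : α) : ℕ :=
  {r | T.Adj q r}.ncard

/-- A `k`-regular tree: every vertex that is not a leaf has degree `k`. -/
def IsRegularTree {α : Type*} (k : ℕ) (T : SimpleGraph α) : Prop :=
  T.IsTree ∧ ∀ q : α, deg T q = 1 ∨ deg T q = k

/-- Chordal: every cycle of length at least 4 has a chord. -/
def IsChordal {V : Type*} (G : SimpleGraph V) : Prop :=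
  ∀ (v : V) (c : G.Walk v v), c.IsCycle → 4 ≤ c.length →
    ∃ x y : V, x ∈ c.support ∧ y ∈ c.support ∧ G.Adj x y ∧ s(x, y) ∉ c.edges

/-- `H` is a minor of `G`. -/
def IsMinor {W V : Type*} (H : SimpleGraph W) (G : SimpleGraph V) : Prop :=
  ∃ B : W → Set V,
    (∀ w, (G.induce (B w)).Connected) ∧
    (∀ w₁ w₂, w₁ ≠ w₂ → Disjoint (B w₁) (B w₂)) ∧
    (∀ w₁ w₂, H.Adj w₁ w₂ → ∃ u ∈ B w₁, ∃ v ∈ B w₂, G.Adj u v)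

/-- Planar (Wagner): no `K₅` and no `K₃,₃` minor. -/
def IsPlanar {V : Type*} (G : SimpleGraph V) : Prop :=
  ¬ IsMinor (⊤ : SimpleGraph (Fin 5)) G ∧
  ¬ IsMinor (completeBipartiteGraph (Fin 3) (Fin 3)) G

section KTree
variable {V : Type*} [Fintype V] [DecidableEq V] {G : SimpleGraph V}

lemma ktree_clique_card_le (hK : IsKTree 3 G) {C : Finset V} (hC : G.IsClique (C : Set V)) :
    C.card ≤ 4 := by
  obtain ⟨hcard, e, hbase, hstep⟩ := hK
  by_contra h
  push_neg at h
  have hne : C.Nonempty := Finset.card_pos.mp (by omega)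
  obtain ⟨u, huC, hu⟩ := C.exists_max_image (fun v => (e.symm v : ℕ)) hne
  by_cases hm : ((e.symm u : ℕ)) < 4
  · -- all indices < 4, so C.card ≤ 4
    have hinj : Function.Injective (fun v : V => (e.symm v : ℕ)) := by
      intro a b hab
      exact e.symm.injective (Fin.val_injective hab)
    have himg : C.image (fun v => (e.symm v : ℕ)) ⊆ Finset.range 4 := by
      intro x hx
      simp only [Finset.mem_image] at hx
      obtain ⟨a, ha, rfl⟩ := hx
      exact Finset.mem_range.mpr (lt_of_le_of_lt (hu a ha) hm)
    have := Finset.card_le_card himg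
    rw [Finset.card_image_of_injective _ hinj, Finset.card_range] at this
    omega
  · obtain ⟨S, hScard, _, hSiff⟩ := hstep (e.symm u) (by omega)
    have hsub : C.erase u ⊆ S := by
      intro v hv
      have hvC := Finset.mem_of_mem_erase hv
      have hvu : v ≠ u := Finset.ne_of_mem_erase hv
      apply (hSiff v).mp
      constructor
      · have := hC huC hvC (Ne.symm hvu)
        simpa using this
      · refine ⟨e.symm v, ?_, by simp⟩
        have hle := hu v hvC
        have hne' : e.symm v ≠ e.symm u := fun hh => hvu (by simpa using congrArg e hh)
        exact Fin.lt_iff_val_lt_val.mpr (lt_of_le_of_ne hle (fun hh => hne' (Fin.val_injective hh)))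
    have := Finset.card_le_card hsub
    rw [Finset.card_erase_of_mem huC, hScard] at this
    omega

lemma ktree_avoid_connected (hK : IsKTree 3 G) (W : Finset V) (hW : W.card ≤ 2)
    {x y : V} (hx : x ∉ W) (hy : y ∉ W) :
    ∃ w : G.Walk x y, ∀ z ∈ w.support, z ∉ W := by
  obtain ⟨hcard, e, hbase, hstep⟩ := hK
  have key : ∀ (n : ℕ) (i : Fin (Fintype.card V)), (i : ℕ) = n → e i ∉ W →
      ∃ b : Fin (Fintype.card V), (b : ℕ) < 4 ∧ e b ∉ W ∧
        ∃ w : G.Walk (e i) (e b), ∀ z ∈ w.support, z ∉ W := by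
    intro n
    induction n using Nat.strong_induction_on with
    | _ n ih =>
      intro i hi hiW
      by_cases h4 : (i : ℕ) < 4
      · exact ⟨i, h4, hiW, Walk.nil, by simpa using hiW⟩
      · obtain ⟨S, hScard, _, hSiff⟩ := hstep i (by omega)
        have hns : ¬ S ⊆ W := fun hss => by have := Finset.card_le_card hss; omega
        obtain ⟨v, hvS, hvW⟩ := Finset.not_subset.mp hns
        obtain ⟨hadj, j, hji, hjv⟩ := (hSiff v).mpr hvS
        obtain ⟨b, hb4, hbW, w', hw'⟩ := ih (j : ℕ) (by omega) j rfl (by rwa [hjv])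
        subst hjv
        exact ⟨b, hb4, hbW, Walk.cons hadj w', by
          intro z hz
          rcases List.mem_cons.mp (by simpa using hz) with h | h
          · subst h; exact hiW
          · exact hw' z h⟩
  obtain ⟨bx, hbx4, hbxW, wx0, hwx0⟩ := key (e.symm x : ℕ) (e.symm x) rfl (by simpa using hx)
  obtain ⟨by', hby4, hbyW, wy0, hwy0⟩ := key (e.symm y : ℕ) (e.symm y) rfl (by simpa using hy)
  let wx := wx0.copy (e.apply_symm_apply x) rfl
  let wy := wy0.copy (e.apply_symm_apply y) rfl
  have hwx : ∀ z ∈ wx.support, z ∉ W := by simpa [wx, Walk.support_copy] using hwx0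
  have hwy : ∀ z ∈ wy.support, z ∉ W := by simpa [wy, Walk.support_copy] using hwy0
  by_cases hbb : bx = by'
  · subst hbb
    refine ⟨wx.append wy.reverse, ?_⟩
    intro z hz
    rcases (Walk.mem_support_append_iff _ _).mp hz with h | h
    · exact hwx z h
    · exact hwy z (by simpa [Walk.support_reverse] using h)
  · have hadj : G.Adj (e bx) (e by') := hbase bx by' hbx4 hby4 hbb
    refine ⟨wx.append (Walk.cons hadj wy.reverse), ?_⟩
    intro z hz
    rcases (Walk.mem_support_append_iff _ _).mp hz with h | h
    · exact hwx z h
    · rcases List.mem_cons.mp (by simpa using h) with h' | h'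
      · subst h'; exact hbxW
      · exact hwy z (by simpa [Walk.support_reverse] using h')

lemma clique_exists_maximal {C : Finset V} (hC : G.IsClique (C : Set V)) :
    ∃ Q : Finset V, IsMaximalClique G Q ∧ C ⊆ Q := by
  have key : ∀ (k : ℕ) (D : Finset V), G.IsClique (D : Set V) →
      Fintype.card V ≤ D.card + k → ∃ Q, IsMaximalClique G Q ∧ D ⊆ Q := by
    intro k
    induction k with
    | zero =>
      intro D hD hcard
      have : D = Finset.univ := Finset.eq_univ_of_card D (le_antisymm (Finset.card_le_univ D)
        (by simpa using hcard))
      refine ⟨D, ⟨hD, fun R hR hDR => ?_⟩, subset_rfl⟩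
      apply Finset.eq_of_subset_of_card_le hDR
      rw [this]; exact Finset.card_le_univ R
    | succ k ih =>
      intro D hD hcard
      by_cases hmax : ∀ R : Finset V, G.IsClique (R : Set V) → D ⊆ R → D = R
      · exact ⟨D, ⟨hD, hmax⟩, subset_rfl⟩
      · push_neg at hmax
        obtain ⟨R, hR, hDR, hne⟩ := hmax
        have : D.card < R.card := Finset.card_lt_card (lt_of_le_of_ne hDR hne)
        obtain ⟨Q, hQ, hRQ⟩ := ih R hR (by omega)
        exact ⟨Q, hQ, hDR.trans hRQ⟩
  exact key (Fintype.card V) C hC (by omega)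

lemma maximal_clique_card_le (hK : IsKTree 3 G) {Q : Finset V} (hQ : IsMaximalClique G Q) :
    Q.card ≤ 4 := ktree_clique_card_le hK hQ.1

end KTree

section TreeSide
variable {α : Type*} {T : SimpleGraph α}

lemma tree_not_reach_delete (hT : T.IsAcyclic) {A B : α} (hAB : T.Adj A B) :
    ¬ (T.deleteEdges {s(A, B)}).Reachable A B := by
  have hbr := isAcyclic_iff_forall_adj_isBridge.mp hT hAB
  exact isBridge_iff.mp hbr

lemma walk_side {A B X R : α} (w : T.Walk X R)
    (hX : (T.deleteEdges {s(A, B)}).Reachable A X ∨ (T.deleteEdges {s(A, B)}).Reachable B X) :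
    (T.deleteEdges {s(A, B)}).Reachable A R ∨ (T.deleteEdges {s(A, B)}).Reachable B R := by
  induction w with
  | nil => exact hX
  | @cons u c r h q ih =>
    apply ih
    by_cases he : s(u, c) = s(A, B)
    · rcases Sym2.eq_iff.mp he with ⟨rfl, rfl⟩ | ⟨rfl, rfl⟩
      · exact Or.inr (Reachable.refl _)
      · exact Or.inl (Reachable.refl _)
    · have hadj : (T.deleteEdges {s(A, B)}).Adj u c := by
        rw [deleteEdges_adj]
        exact ⟨h, by simpa using he⟩
      rcases hX with h1 | h1
      · exact Or.inl (h1.trans hadj.reachable)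
      · exact Or.inr (h1.trans hadj.reachable)

lemma tree_side_total (hT : T.Connected) {A B R : α} :
    (T.deleteEdges {s(A, B)}).Reachable A R ∨ (T.deleteEdges {s(A, B)}).Reachable B R := by
  obtain ⟨w⟩ := hT.preconnected A R
  exact walk_side w (Or.inl (Reachable.refl _))

lemma tree_sides_disjoint (hT : T.IsAcyclic) {A B R : α} (hAB : T.Adj A B)
    (h1 : (T.deleteEdges {s(A, B)}).Reachable A R)
    (h2 : (T.deleteEdges {s(A, B)}).Reachable B R) : False :=
  tree_not_reach_delete hT hAB (h1.trans h2.symm)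

lemma tree_crossing (hT : T.IsAcyclic) {A B : α} (hAB : T.Adj A B) {R R' : α} (w : T.Walk R R')
    (hR : (T.deleteEdges {s(A, B)}).Reachable A R)
    (hR' : (T.deleteEdges {s(A, B)}).Reachable B R') :
    A ∈ w.support ∧ B ∈ w.support := by
  by_cases he : s(A, B) ∈ w.edges
  · exact ⟨w.fst_mem_support_of_mem_edges he, w.snd_mem_support_of_mem_edges he⟩
  · exfalso
    have w' := w.toDeleteEdges {s(A, B)} (fun e hew => by
      simp only [Set.mem_singleton_iff]
      rintro rfl; exact he hew)
    exact tree_not_reach_delete hT hAB (hR.trans (Reachable.trans ⟨w'⟩ hR'.symm))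

end TreeSide

section CliqueTreeLemmas
variable {V : Type*} {G : SimpleGraph V}
  {T : SimpleGraph {Q : Finset V // IsMaximalClique G Q}}

lemma clique_subtree_both (hCT : IsCliqueTree G T)
    {A B RA RB : {Q : Finset V // IsMaximalClique G Q}} (hAB : T.Adj A B) {v : V}
    (hA : v ∈ (RA : Finset V)) (hB : v ∈ (RB : Finset V))
    (sA : (T.deleteEdges {s(A, B)}).Reachable A RA)
    (sB : (T.deleteEdges {s(A, B)}).Reachable B RB) :
    v ∈ (A : Finset V) ∧ v ∈ (B : Finset V) := by
  obtain ⟨w0⟩ := (hCT.2 v).preconnected ⟨RA, hA⟩ ⟨RB, hB⟩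
  let f : (T.induce {Q : {Q : Finset V // IsMaximalClique G Q} | v ∈ (Q : Finset V)}) →g T :=
    ⟨Subtype.val, fun {a b} h => h⟩
  have hcr := tree_crossing hCT.1.2 hAB (w0.map f) sA sB
  obtain ⟨hAs, hBs⟩ := hcr
  rw [Walk.support_map] at hAs hBs
  obtain ⟨a, _, haa⟩ := List.mem_map.mp hAs
  obtain ⟨b, _, hbb⟩ := List.mem_map.mp hBs
  exact ⟨haa ▸ a.2, hbb ▸ b.2⟩

variable [Fintype V] [DecidableEq V]

lemma sep_walk (hCT : IsCliqueTree G T)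
    {A B : {Q : Finset V // IsMaximalClique G Q}} (hAB : T.Adj A B)
    {x y : V} (w : G.Walk x y) :
    ∀ (RA RB : {Q : Finset V // IsMaximalClique G Q}),
      x ∈ (RA : Finset V) → y ∈ (RB : Finset V) →
      (T.deleteEdges {s(A, B)}).Reachable A RA →
      (T.deleteEdges {s(A, B)}).Reachable B RB →
      ∃ z ∈ w.support, z ∈ (A : Finset V) ∧ z ∈ (B : Finset V) := by
  induction w with
  | nil =>
    intro RA RB hx hy sA sB
    exact ⟨_, Walk.start_mem_support _, clique_subtree_both hCT hAB hx hy sA sB⟩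
  | @cons x u y h q ih =>
    intro RA RB hx hy sA sB
    have hcl : G.IsClique (({x, u} : Finset V) : Set V) := by
      intro a ha b hb hne
      simp only [Finset.coe_insert, Finset.coe_singleton, Set.mem_insert_iff,
        Set.mem_singleton_iff] at ha hb
      rcases ha with rfl | rfl <;> rcases hb with rfl | rfl
      · exact absurd rfl hne
      · exact h
      · exact h.symm
      · exact absurd rfl hne
    obtain ⟨Rf, hRf, hsub⟩ := clique_exists_maximal hcl
    have hxR : x ∈ Rf := hsub (by simp)
    have huR : u ∈ Rf := hsub (by simp)
    rcases tree_side_total (R := (⟨Rf, hRf⟩ : {Q : Finset V // IsMaximalClique G Q}))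
        hCT.1.1 (A := A) (B := B) with hs | hs
    · obtain ⟨z, hz, hzz⟩ := ih ⟨Rf, hRf⟩ RB huR hy hs sB
      exact ⟨z, List.mem_cons_of_mem _ hz, hzz⟩
    · exact ⟨x, Walk.start_mem_support _,
        clique_subtree_both hCT hAB hx hxR sA hs⟩

lemma maxclique_ne_sub {A B : {Q : Finset V // IsMaximalClique G Q}} (hne : A ≠ B) :
    ∃ v, v ∈ (A : Finset V) ∧ v ∉ (B : Finset V) := by
  by_contra h
  push_neg at h
  have : (A : Finset V) ⊆ B := fun v hv => h v hv
  have := A.2.2 B B.2.1 this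
  exact hne (Subtype.ext this)

lemma inter_card_ge (hK : IsKTree 3 G) (hCT : IsCliqueTree G T)
    {A B : {Q : Finset V // IsMaximalClique G Q}} (hAB : T.Adj A B) :
    3 ≤ ((A : Finset V) ∩ (B : Finset V)).card := by
  by_contra hlt
  push_neg at hlt
  obtain ⟨x, hxA, hxB⟩ := maxclique_ne_sub (G := G) (hAB.ne)
  obtain ⟨y, hyB, hyA⟩ := maxclique_ne_sub (G := G) (hAB.ne.symm)
  have hxW : x ∉ (A : Finset V) ∩ (B : Finset V) := by simp [hxB]
  have hyW : y ∉ (A : Finset V) ∩ (B : Finset V) := by simp [hyA]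
  obtain ⟨w, hw⟩ := ktree_avoid_connected hK _ (by omega) hxW hyW
  obtain ⟨z, hz, hz1, hz2⟩ := sep_walk hCT hAB w A B hxA hyB (Reachable.refl _) (Reachable.refl _)
  exact hw z hz (Finset.mem_inter.mpr ⟨hz1, hz2⟩)

end CliqueTreeLemmas


section PathLemmas
variable {α : Type*} {T : SimpleGraph α}

lemma exists_supwalk [DecidableEq α] {u v a b : α} (p : T.Walk u v) (ha : a ∈ p.support) (hb : b ∈ p.support) :
    ∃ w : T.Walk a b, ∀ e ∈ w.edges, e ∈ p.edges := by
  refine ⟨(p.takeUntil a ha).reverse.append (p.takeUntil b hb), ?_⟩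
  intro e he
  rw [Walk.edges_append] at he
  rcases List.mem_append.mp he with h | h
  · rw [Walk.edges_reverse] at h
    exact p.edges_takeUntil_subset ha (List.mem_reverse.mp h)
  · exact p.edges_takeUntil_subset hb h

lemma adj_support_edge [DecidableEq α] (hT : T.IsAcyclic) {u v a b : α} {p : T.Walk u v}
    (ha : a ∈ p.support) (hb : b ∈ p.support) (hadj : T.Adj a b) : s(a, b) ∈ p.edges := by
  obtain ⟨w, hw⟩ := exists_supwalk p ha hb
  have hbr := isAcyclic_iff_forall_adj_isBridge.mp hT hadj
  exact hw _ ((isBridge_iff_adj_and_forall_walk_mem_edges.mp hbr) w)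

lemma parent_unique [DecidableEq α] (hT : T.IsAcyclic) {u v a b r : α} {p : T.Walk u v}
    (ha : a ∈ p.support) (hb : b ∈ p.support) (hr : r ∉ p.support)
    (har : T.Adj a r) (hbr : T.Adj b r) : a = b := by
  obtain ⟨w, hw⟩ := exists_supwalk p ha hb
  have hbrg := isAcyclic_iff_forall_adj_isBridge.mp hT har
  have hmem := (isBridge_iff_adj_and_forall_walk_mem_edges.mp hbrg)
    (w.append (Walk.cons hbr Walk.nil))
  rw [Walk.edges_append] at hmem
  rcases List.mem_append.mp hmem with h | h
  · exact absurd (Walk.snd_mem_support_of_mem_edges p (hw _ h)) hr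
  · simp only [Walk.edges_cons, Walk.edges_nil, List.mem_singleton] at h
    rcases Sym2.eq_iff.mp h with ⟨h1, _⟩ | ⟨h1, _⟩
    · exact h1
    · exact absurd h1 har.ne

lemma first_partner_unique {u v : α} {p : T.Walk u v} (hp : p.IsPath) {x y : α}
    (hx : s(u, x) ∈ p.edges) (hy : s(u, y) ∈ p.edges) : x = y := by
  cases p with
  | nil => simp at hx
  | @cons _ c _ h q =>
    rw [Walk.cons_isPath_iff] at hp
    have key : ∀ z : α, s(u, z) ∈ (Walk.cons h q).edges → z = c := by
      intro z hz
      rw [Walk.edges_cons, List.mem_cons] at hz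
      rcases hz with hz | hz
      · rcases Sym2.eq_iff.mp hz with ⟨_, h2⟩ | ⟨h1, _⟩
        · exact h2
        · exact absurd h1 h.ne
      · exact absurd (Walk.fst_mem_support_of_mem_edges q hz) hp.2
    rw [key x hx, key y hy]

lemma support_partner_le_two {u v : α} (p : T.Walk u v) (hp : p.IsPath) (q : α) {x y z : α}
    (hxy : x ≠ y) (hxz : x ≠ z) (hyz : y ≠ z)
    (hx : s(q, x) ∈ p.edges) (hy : s(q, y) ∈ p.edges) (hz : s(q, z) ∈ p.edges) : False := by
  induction p with
  | nil => simp at hx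
  | @cons a c b h r ih =>
    have hp' : r.IsPath := ((Walk.cons_isPath_iff h r).mp hp).1
    by_cases hqa : q = a
    · subst hqa
      exact hxy (first_partner_unique hp hx hy)
    · by_cases hqc : q = c
      · subst hqc
        have key : ∀ w' : α, s(q, w') ∈ (Walk.cons h r).edges → w' = a ∨ s(q, w') ∈ r.edges := by
          intro w' hw'
          rw [Walk.edges_cons, List.mem_cons] at hw'
          rcases hw' with hw' | hw'
          · rcases Sym2.eq_iff.mp hw' with ⟨h1, _⟩ | ⟨_, h2⟩
            · exact absurd h1.symm h.ne
            · exact Or.inl h2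
          · exact Or.inr hw'
        rcases key x hx with h1 | h1 <;> rcases key y hy with h2 | h2 <;>
          rcases key z hz with h3 | h3
        · exact hxy (h1.trans h2.symm)
        · exact hxy (h1.trans h2.symm)
        · exact hxz (h1.trans h3.symm)
        · exact hyz (first_partner_unique hp' h2 h3)
        · exact hyz (h2.trans h3.symm)
        · exact hxz (first_partner_unique hp' h1 h3)
        · exact hxy (first_partner_unique hp' h1 h2)
        · exact hxy (first_partner_unique hp' h1 h2)
      · have key : ∀ w' : α, s(q, w') ∈ (Walk.cons h r).edges → s(q, w') ∈ r.edges := by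
          intro w' hw'
          rw [Walk.edges_cons, List.mem_cons] at hw'
          rcases hw' with hw' | hw'
          · rcases Sym2.eq_iff.mp hw' with ⟨h1, _⟩ | ⟨h1, h2⟩
            · exact absurd h1 hqa
            · exact absurd h1 hqc
          · exact hw'
        exact ih hp' (key x hx) (key y hy) (key z hz)

end PathLemmas

section SupportIndex
variable {α : Type*} {G : SimpleGraph α}

lemma support_getVert {u v : α} (p : G.Walk u v) :
    ∀ (i : ℕ) (hi : i < p.support.length), p.support[i] = p.getVert i := by
  induction p with
  | nil =>
    intro i hi
    simp only [Walk.support_nil, List.length_singleton] at hi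
    interval_cases i
    · simp [Walk.getVert]
  | @cons a c b h q ih =>
    intro i hi
    cases i with
    | zero => simp [Walk.getVert_zero]
    | succ n =>
      rw [Walk.getVert_cons_succ]
      simp only [Walk.support_cons, List.getElem_cons_succ]
      exact ih n (by simp only [Walk.support_cons, List.length_cons] at hi; omega)

lemma getVert_injOn_of_nodup {u v : α} {p : G.Walk u v}
    (h : p.support.Nodup) {i j : ℕ} (hi : i ≤ p.length) (hj : j ≤ p.length)
    (hij : p.getVert i = p.getVert j) : i = j := by
  have hi' : i < p.support.length := by rw [Walk.length_support]; omega
  have hj' : j < p.support.length := by rw [Walk.length_support]; omega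
  have e1 := support_getVert p i hi'
  have e2 := support_getVert p j hj'
  have : p.support[i] = p.support[j] := by rw [e1, e2, hij]
  exact List.Nodup.getElem_inj_iff h |>.mp this

end SupportIndex


section Main
variable {V : Type*} [Fintype V] [DecidableEq V] {G : SimpleGraph V}
  {T : SimpleGraph {Q : Finset V // IsMaximalClique G Q}}

lemma main_sep (hK : IsKTree 3 G) (hCT : IsCliqueTree G T)
    {qi qj : {Q : Finset V // IsMaximalClique G Q}} (hij : qi ≠ qj)
    (hqi : deg T qi = 4) (hqj : deg T qj = 4)
    (p : T.Walk qi qj) (hp : p.IsPath)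
    (hdeg3 : ∀ q ∈ p.support, q ≠ qi → q ≠ qj → deg T q = 3) :
    ∃ S : Finset V, S.Nonempty ∧ S.card < compCount G S ∧ 1 < compCount G S := by
  classical
  haveI : Finite {Q : Finset V // IsMaximalClique G Q} := Subtype.finite
  haveI : Nonempty V := Fintype.card_pos_iff.mp (by have := hK.1; omega)
  have hacy : T.IsAcyclic := hCT.1.2
  set n := p.length with hn_def
  have hn : 1 ≤ n := by
    cases p with
    | nil => exact absurd rfl hij
    | cons h q => simp [hn_def]
  set S : Finset V := p.support.toFinset.biUnion (fun Q => (Q : Finset V)) with hS_def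
  have hSmem : ∀ v : V, v ∈ S ↔ ∃ q ∈ p.support, v ∈ (q : Finset V) := by
    intro v
    simp [hS_def, Finset.mem_biUnion, List.mem_toFinset]
  -- Step A : card bound
  have hcardS : ∀ {a b : {Q : Finset V // IsMaximalClique G Q}} (w : T.Walk a b),
      (w.support.toFinset.biUnion (fun Q => (Q : Finset V))).card ≤ 4 + w.length := by
    intro a b w
    induction w with
    | nil =>
      rename_i a0
      simp only [Walk.support_nil, Walk.length_nil]
      have heq : ([a0].toFinset.biUnion (fun Q => (Q : Finset V))) = (a0 : Finset V) := by
        simp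
      rw [heq]
      have := maximal_clique_card_le hK a0.2
      omega
    | @cons a c b h r ih =>
      have hset : ((Walk.cons h r).support.toFinset.biUnion (fun Q => (Q : Finset V)))
          = (a : Finset V) ∪ (r.support.toFinset.biUnion (fun Q => (Q : Finset V))) := by
        rw [Walk.support_cons, List.toFinset_cons, Finset.biUnion_insert]
      have hcsub : (c : Finset V) ⊆ r.support.toFinset.biUnion (fun Q => (Q : Finset V)) := by
        intro v hv
        rw [Finset.mem_biUnion]
        exact ⟨c, by simp [Walk.start_mem_support], hv⟩
      have hsub : (a : Finset V) ∪ (r.support.toFinset.biUnion (fun Q => (Q : Finset V)))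
          ⊆ ((a : Finset V) \ (c : Finset V)) ∪
            (r.support.toFinset.biUnion (fun Q => (Q : Finset V))) := by
        intro v hv
        rcases Finset.mem_union.mp hv with hv | hv
        · by_cases hvc : v ∈ (c : Finset V)
          · exact Finset.mem_union_right _ (hcsub hvc)
          · exact Finset.mem_union_left _ (Finset.mem_sdiff.mpr ⟨hv, hvc⟩)
        · exact Finset.mem_union_right _ hv
      have hdiff : ((a : Finset V) \ (c : Finset V)).card ≤ 1 := by
        have h1 : ((a : Finset V) \ (c : Finset V))
            = (a : Finset V) \ ((a : Finset V) ∩ (c : Finset V)) := by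
          ext v; simp only [Finset.mem_sdiff, Finset.mem_inter]; tauto
        have h2 := inter_card_ge hK hCT h
        have h3 := maximal_clique_card_le hK a.2
        rw [h1, Finset.card_sdiff_of_subset Finset.inter_subset_left]
        omega
      calc ((Walk.cons h r).support.toFinset.biUnion (fun Q => (Q : Finset V))).card
          ≤ (((a : Finset V) \ (c : Finset V)) ∪
            (r.support.toFinset.biUnion (fun Q => (Q : Finset V)))).card := by
            rw [hset]; exact Finset.card_le_card hsub
        _ ≤ ((a : Finset V) \ (c : Finset V)).card
            + (r.support.toFinset.biUnion (fun Q => (Q : Finset V))).card :=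
            Finset.card_union_le _ _
        _ ≤ 1 + (4 + r.length) := by have := ih; omega
        _ ≤ 4 + (Walk.cons h r).length := by rw [Walk.length_cons]; omega
  have hScard : S.card ≤ 4 + n := hcardS p
  -- Step D : reach lemma
  have reach_lemma : ∀ (q r ql : {Q : Finset V // IsMaximalClique G Q}), q ∈ p.support → ql ∈ p.support → r ∉ p.support →
      (T.deleteEdges {s(r, q)}).Reachable q ql := by
    intro q r ql hq hql hr
    obtain ⟨w, hw⟩ := exists_supwalk p hq hql
    refine ⟨w.toDeleteEdges _ (fun e he => ?_)⟩
    simp only [Set.mem_singleton_iff]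
    rintro rfl
    exact hr (Walk.fst_mem_support_of_mem_edges p (hw _ he))
  -- Step E : pick a vertex of a child clique outside S
  have vOf : ∀ (q r : {Q : Finset V // IsMaximalClique G Q}), q ∈ p.support → T.Adj q r → r ∉ p.support →
      ∃ v, v ∈ (r : Finset V) ∧ v ∉ S := by
    intro q r hq hr hrs
    obtain ⟨v, hvr, hvq⟩ := maxclique_ne_sub (G := G) (A := r) (B := q)
      (fun hh => hrs (hh ▸ hq))
    refine ⟨v, hvr, fun hvS => ?_⟩
    obtain ⟨ql, hql, hvql⟩ := (hSmem v).mp hvS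
    exact hvq (clique_subtree_both hCT hr.symm hvr hvql (Reachable.refl _)
      (reach_lemma q r ql hq hql hrs)).2
  -- Step F : separation
  have sepF : ∀ (q r q' r' : {Q : Finset V // IsMaximalClique G Q}), q ∈ p.support → q' ∈ p.support →
      T.Adj q r → T.Adj q' r' → r ∉ p.support → r' ∉ p.support → r ≠ r' →
      ∀ (v v' : V), v ∈ (r : Finset V) → v' ∈ (r' : Finset V) →
      ∀ (w : G.Walk v v'), (∀ z ∈ w.support, z ∉ S) → False := by
    intro q r q' r' hq hq' hr hr' hrs hr's hrr' v v' hv hv' w hwS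
    have hedge : (T.deleteEdges {s(r, q)}).Adj q' r' := by
      rw [deleteEdges_adj]
      refine ⟨hr', ?_⟩
      simp only [Set.mem_singleton_iff]
      intro heq
      rcases Sym2.eq_iff.mp heq with ⟨h1, _⟩ | ⟨_, h2⟩
      · exact hrs (h1 ▸ hq')
      · exact hrr' h2.symm
    have sB : (T.deleteEdges {s(r, q)}).Reachable q r' :=
      (reach_lemma q r q' hq hq' hrs).trans hedge.reachable
    obtain ⟨z, hz, hz1, hz2⟩ := sep_walk hCT hr.symm w r r' hv hv'
      (Reachable.refl _) sB
    exact hwS z hz ((hSmem z).mpr ⟨q, hq, hz2⟩)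
  -- Step G : the off-path sets
  set Off : {Q : Finset V // IsMaximalClique G Q} → Set {Q : Finset V // IsMaximalClique G Q} := fun q => {r | T.Adj q r ∧ r ∉ p.support} with hOff_def
  set Iset : Set {Q : Finset V // IsMaximalClique G Q} := {q | q ∈ p.support ∧ q ≠ qi ∧ q ≠ qj} with hIset_def
  set U : Set {Q : Finset V // IsMaximalClique G Q} := ⋃ q ∈ Iset, Off q with hU_def
  set Dset : Set {Q : Finset V // IsMaximalClique G Q} := Off qi ∪ Off qj ∪ U with hD_def
  have hD : ∀ r ∈ Dset, ∃ q, q ∈ p.support ∧ T.Adj q r ∧ r ∉ p.support := by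
    intro r hr
    rcases hr with (hr | hr) | hr
    · exact ⟨qi, p.start_mem_support, hr.1, hr.2⟩
    · exact ⟨qj, p.end_mem_support, hr.1, hr.2⟩
    · simp only [hU_def, Set.mem_iUnion] at hr
      obtain ⟨q, hq, hrq⟩ := hr
      exact ⟨q, hq.1, hrq.1, hrq.2⟩
  choose! par hpar1 hpar2 hpar3 using hD
  have hvv0 : ∀ r : {Q : Finset V // IsMaximalClique G Q}, ∃ v : V,
      r ∈ Dset → (v ∈ (r : Finset V) ∧ v ∉ S) := by
    intro r
    by_cases hr : r ∈ Dset
    · obtain ⟨v, h1, h2⟩ := vOf (par r) r (hpar1 r hr) (hpar2 r hr) (hpar3 r hr)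
      exact ⟨v, fun _ => ⟨h1, h2⟩⟩
    · exact ⟨Classical.arbitrary V, fun h => absurd h hr⟩
  choose vv hvv' using hvv0
  -- ncard of Dset ≤ compCount
  have hcc : Dset.ncard ≤ compCount G S := by
    rw [← Nat.card_coe_set_eq]
    have hFinj : Function.Injective (fun r : ↥Dset =>
        (G.induce ((↑S : Set V)ᶜ)).connectedComponentMk ⟨vv r.1, (hvv' r.1 r.2).2⟩) := by
      intro r1 r2 heq
      by_contra hne
      have hne' : r1.1 ≠ r2.1 := fun hh => hne (Subtype.ext hh)
      obtain ⟨w0⟩ := (ConnectedComponent.eq).mp heq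
      let f : (G.induce ((↑S : Set V)ᶜ)) →g G := ⟨Subtype.val, fun {a b} h => h⟩
      refine sepF (par r1.1) r1.1 (par r2.1) r2.1 (hpar1 r1.1 r1.2) (hpar1 r2.1 r2.2)
        (hpar2 r1.1 r1.2) (hpar2 r2.1 r2.2) (hpar3 r1.1 r1.2) (hpar3 r2.1 r2.2) hne'
        (vv r1.1) (vv r2.1) ((hvv' r1.1 r1.2).1) ((hvv' r2.1 r2.2).1) (w0.map f) ?_
      intro z hz
      rw [Walk.support_map] at hz
      obtain ⟨z', _, rfl⟩ := List.mem_map.mp hz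
      exact z'.2
    exact Nat.card_le_card_of_injective _ hFinj
  -- Step H : counting
  have on_qi : {r : {Q : Finset V // IsMaximalClique G Q} | T.Adj qi r ∧ r ∈ p.support}.ncard ≤ 1 := by
    rw [Set.ncard_le_one_iff_eq]
    by_cases hne : {r : {Q : Finset V // IsMaximalClique G Q} | T.Adj qi r ∧ r ∈ p.support} = ∅
    · exact Or.inl hne
    · obtain ⟨r0, hr0⟩ := Set.nonempty_iff_ne_empty.mpr hne
      right
      refine ⟨r0, Set.eq_singleton_iff_unique_mem.mpr ⟨hr0, fun r hr => ?_⟩⟩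
      have e1 : s(qi, r) ∈ p.edges :=
        adj_support_edge hacy p.start_mem_support hr.2 hr.1
      have e2 : s(qi, r0) ∈ p.edges :=
        adj_support_edge hacy p.start_mem_support hr0.2 hr0.1
      exact first_partner_unique hp e1 e2
  have on_qj : {r : {Q : Finset V // IsMaximalClique G Q} | T.Adj qj r ∧ r ∈ p.support}.ncard ≤ 1 := by
    rw [Set.ncard_le_one_iff_eq]
    by_cases hne : {r : {Q : Finset V // IsMaximalClique G Q} | T.Adj qj r ∧ r ∈ p.support} = ∅
    · exact Or.inl hne
    · obtain ⟨r0, hr0⟩ := Set.nonempty_iff_ne_empty.mpr hne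
      right
      refine ⟨r0, Set.eq_singleton_iff_unique_mem.mpr ⟨hr0, fun r hr => ?_⟩⟩
      have e1 : s(qj, r) ∈ p.reverse.edges := by
        rw [Walk.edges_reverse, List.mem_reverse]
        exact adj_support_edge hacy p.end_mem_support hr.2 hr.1
      have e2 : s(qj, r0) ∈ p.reverse.edges := by
        rw [Walk.edges_reverse, List.mem_reverse]
        exact adj_support_edge hacy p.end_mem_support hr0.2 hr0.1
      exact first_partner_unique hp.reverse e1 e2
  have adj_split : ∀ q : {Q : Finset V // IsMaximalClique G Q}, {r : {Q : Finset V // IsMaximalClique G Q} | T.Adj q r} =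
      {r : {Q : Finset V // IsMaximalClique G Q} | T.Adj q r ∧ r ∈ p.support} ∪ Off q := by
    intro q
    ext r
    simp only [Set.mem_setOf_eq, Set.mem_union, hOff_def]
    tauto
  have hOffqi : 3 ≤ (Off qi).ncard := by
    have h4 : {r : {Q : Finset V // IsMaximalClique G Q} | T.Adj qi r}.ncard = 4 := hqi
    have := Set.ncard_union_le {r : {Q : Finset V // IsMaximalClique G Q} | T.Adj qi r ∧ r ∈ p.support} (Off qi)
    rw [← adj_split qi] at this
    omega
  have hOffqj : 3 ≤ (Off qj).ncard := by
    have h4 : {r : {Q : Finset V // IsMaximalClique G Q} | T.Adj qj r}.ncard = 4 := hqj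
    have := Set.ncard_union_le {r : {Q : Finset V // IsMaximalClique G Q} | T.Adj qj r ∧ r ∈ p.support} (Off qj)
    rw [← adj_split qj] at this
    omega
  have hOffint : ∀ q ∈ Iset, (Off q).Nonempty := by
    intro q hq
    obtain ⟨hqs, hqi', hqj'⟩ := hq
    have h3 : {r : {Q : Finset V // IsMaximalClique G Q} | T.Adj q r}.ncard = 3 := hdeg3 q hqs hqi' hqj'
    have hon : {r : {Q : Finset V // IsMaximalClique G Q} | T.Adj q r ∧ r ∈ p.support}.ncard ≤ 2 := by
      by_contra hgt
      push_neg at hgt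
      obtain ⟨x, y, z, hx, hy, hz, hxy, hxz, hyz⟩ :=
        (Set.two_lt_ncard_iff (Set.toFinite _)).mp hgt
      exact support_partner_le_two p hp q hxy hxz hyz
        (adj_support_edge hacy hqs hx.2 hx.1)
        (adj_support_edge hacy hqs hy.2 hy.1)
        (adj_support_edge hacy hqs hz.2 hz.1)
    have := Set.ncard_union_le {r : {Q : Finset V // IsMaximalClique G Q} | T.Adj q r ∧ r ∈ p.support} (Off q)
    rw [← adj_split q] at this
    have : 1 ≤ (Off q).ncard := by omega
    exact Set.nonempty_of_ncard_ne_zero (by omega)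
  -- disjointness
  have hpar_uniq : ∀ (q q' : {Q : Finset V // IsMaximalClique G Q}), q ∈ p.support → q' ∈ p.support →
      ∀ r, r ∈ Off q → r ∈ Off q' → q = q' := by
    intro q q' hq hq' r hr hr'
    exact parent_unique hacy hq hq' hr.2 hr.1 hr'.1
  have hdisj1 : Disjoint (Off qi) (Off qj) := by
    rw [Set.disjoint_left]
    intro r hr hr'
    exact hij (hpar_uniq qi qj p.start_mem_support p.end_mem_support r hr hr')
  have hdisj2 : Disjoint (Off qi ∪ Off qj) U := by
    rw [Set.disjoint_left]
    intro r hr hrU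
    simp only [hU_def, Set.mem_iUnion] at hrU
    obtain ⟨q, hq, hrq⟩ := hrU
    rcases hr with hr | hr
    · exact hq.2.1 (hpar_uniq q qi hq.1 p.start_mem_support r hrq hr)
    · exact hq.2.2 (hpar_uniq q qj hq.1 p.end_mem_support r hrq hr)
  -- lower bound on U
  have hIcard : Iset.ncard = n - 1 := by
    have hIeq : Iset = ↑(p.support.toFinset \ {qi, qj}) := by
      ext q
      simp only [hIset_def, Set.mem_setOf_eq, Finset.coe_sdiff, Set.mem_diff,
        Finset.coe_insert, Finset.coe_singleton, Set.mem_insert_iff, Set.mem_singleton_iff,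
        Finset.mem_coe, List.mem_toFinset]
      tauto
    rw [hIeq, Set.ncard_coe_finset]
    rw [Finset.card_sdiff_of_subset (by
      intro q hq
      simp only [Finset.mem_insert, Finset.mem_singleton] at hq
      rcases hq with rfl | rfl
      · exact List.mem_toFinset.mpr p.start_mem_support
      · exact List.mem_toFinset.mpr p.end_mem_support)]
    rw [List.toFinset_card_of_nodup hp.support_nodup, Walk.length_support,
      Finset.card_pair hij]
    rw [hn_def]
    omega
  have hUcard : n - 1 ≤ U.ncard := by
    have hrep : ∀ q ∈ Iset, ∃ r, r ∈ Off q := fun q hq => hOffint q hq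
    choose! rep hrep' using hrep
    have hmap : ∀ q ∈ Iset, rep q ∈ U := by
      intro q hq
      simp only [hU_def, Set.mem_iUnion]
      exact ⟨q, hq, hrep' q hq⟩
    have hinj' : Set.InjOn rep Iset := by
      intro q hq q' hq' heq
      exact hpar_uniq q q' hq.1 hq'.1 (rep q) (hrep' q hq) (heq ▸ hrep' q' hq')
    have := Set.ncard_le_ncard_of_injOn rep hmap hinj' (Set.toFinite _)
    omega
  have hDcard : n + 5 ≤ Dset.ncard := by
    have e1 : Dset.ncard = (Off qi ∪ Off qj).ncard + U.ncard := by
      rw [hD_def]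
      exact Set.ncard_union_eq hdisj2 (Set.toFinite _) (Set.toFinite _)
    have e2 : (Off qi ∪ Off qj).ncard = (Off qi).ncard + (Off qj).ncard :=
      Set.ncard_union_eq hdisj1 (Set.toFinite _) (Set.toFinite _)
    omega
  have hSne : S.Nonempty := by
    obtain ⟨v0⟩ := ‹Nonempty V›
    have hqine : (qi : Finset V).Nonempty := by
      by_contra hemp
      rw [Finset.not_nonempty_iff_eq_empty] at hemp
      have hcl : G.IsClique (({v0} : Finset V) : Set V) := by
        intro x hx y hy hxy
        simp only [Finset.coe_singleton, Set.mem_singleton_iff] at hx hy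
        subst hx; subst hy; exact absurd rfl hxy
      have heq := qi.2.2 {v0} hcl (by rw [hemp]; exact Finset.empty_subset _)
      rw [hemp] at heq
      exact (Finset.singleton_ne_empty v0) heq.symm
    obtain ⟨v0', hv0⟩ := hqine
    exact ⟨v0', (hSmem v0').mpr ⟨qi, p.start_mem_support, hv0⟩⟩
  refine ⟨S, hSne, ?_, ?_⟩
  · omega
  · omega

end Main


section Hamiltonian
variable {V : Type*} [Fintype V] [DecidableEq V] {G : SimpleGraph V}

open Fin.NatCast in
lemma cyclic_boundary {n : ℕ} [NeZero n] {P : Set (Fin n)} (h1 : P.Nonempty)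
    (h2 : P ≠ Set.univ) : ∃ i ∈ P, i + 1 ∉ P := by
  by_contra hcon
  push_neg at hcon
  obtain ⟨i0, hi0⟩ := h1
  have hall : ∀ k : ℕ, i0 + (k : Fin n) ∈ P := by
    intro k
    induction k with
    | zero => simpa using hi0
    | succ m ih =>
      have hs : ((m + 1 : ℕ) : Fin n) = (m : Fin n) + 1 := by push_cast; ring
      rw [hs, ← add_assoc]
      exact hcon _ ih
  apply h2
  ext j
  simp only [Set.mem_univ, iff_true]
  have hj := hall ((j - i0).val)
  rwa [Fin.cast_val_eq_self, add_comm, sub_add_cancel] at hj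

lemma hamiltonian_compCount_le (hcard : 4 ≤ Fintype.card V) (hham : G.IsHamiltonian)
    {S : Finset V} (hS : S.Nonempty) : compCount G S ≤ S.card := by
  classical
  obtain ⟨a, w, hw⟩ := hham (by omega)
  set n := Fintype.card V with hn
  haveI : NeZero n := ⟨by omega⟩
  have hlen : w.length = n := hw.length_eq
  have hnotnil : ¬ w.Nil := hw.1.not_nil
  have htpath : w.tail.IsPath := hw.isHamiltonian_tail.isPath
  have htlen : w.tail.length = n - 1 := by
    have := Walk.length_tail_add_one hnotnil
    omega
  set g : Fin n → V := fun i => w.tail.getVert i with hg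
  have hginj : Function.Injective g := by
    intro i j hij
    apply Fin.ext
    exact getVert_injOn_of_nodup htpath.support_nodup
      (by omega) (by omega) hij
  have hgsurj : Function.Surjective g := by
    intro v
    have hv : v ∈ w.tail.support := hw.isHamiltonian_tail.mem_support v
    obtain ⟨k, hk1, hk2⟩ := Walk.mem_support_iff_exists_getVert.mp hv
    exact ⟨⟨k, by omega⟩, hk1⟩
  have hgbij : Function.Bijective g := ⟨hginj, hgsurj⟩
  have hadj : ∀ i : Fin n, G.Adj (g i) (g (i + 1)) := by
    intro i
    have hval : ((i + 1 : Fin n) : ℕ) = ((i : ℕ) + 1) % n := by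
      rw [Fin.val_add, Fin.val_one']
      have : (i : ℕ) + 1 % n = (i : ℕ) + 1 := by
        congr 1
        exact Nat.mod_eq_of_lt (by omega)
      rw [this]
    by_cases hi : (i : ℕ) < n - 1
    · have h1 : ((i + 1 : Fin n) : ℕ) = (i : ℕ) + 1 := by
        rw [hval]
        exact Nat.mod_eq_of_lt (by omega)
      have := w.tail.adj_getVert_succ (i := (i : ℕ)) (by omega)
      simpa [hg, h1] using this
    · have hieq : (i : ℕ) = n - 1 := by omega
      have h1 : ((i + 1 : Fin n) : ℕ) = 0 := by
        rw [hval, hieq]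
        have : n - 1 + 1 = n := by omega
        rw [this, Nat.mod_self]
      have e1 : g i = a := by
        have : w.tail.getVert w.tail.length = a := Walk.getVert_length _
        simp only [hg]
        rw [hieq, ← htlen, this]
      have e2 : g (i + 1) = w.getVert 1 := by
        simp only [hg, h1]
        exact Walk.getVert_zero _
      rw [e1, e2]
      have := w.adj_getVert_succ (i := 0) (by omega)
      rwa [Walk.getVert_zero] at this
  -- component positions
  set CC := (G.induce ((↑S : Set V)ᶜ)).ConnectedComponent with hCC
  have hbd : ∀ C : CC, ∃ i : Fin n,
      (∃ h : g i ∈ ((↑S : Set V)ᶜ), (G.induce ((↑S : Set V)ᶜ)).connectedComponentMk ⟨g i, h⟩ = C)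
      ∧ g (i + 1) ∈ S := by
    intro C
    set P : Set (Fin n) := {i | ∃ h : g i ∈ ((↑S : Set V)ᶜ),
      (G.induce ((↑S : Set V)ᶜ)).connectedComponentMk ⟨g i, h⟩ = C} with hP
    have hPne : P.Nonempty := by
      obtain ⟨x, hx⟩ := C.exists_rep
      obtain ⟨i, hi⟩ := hgsurj x.1
      refine ⟨i, ⟨hi ▸ x.2, ?_⟩⟩
      have hxe : (⟨g i, hi ▸ x.2⟩ : ↥((↑S : Set V)ᶜ)) = x := Subtype.ext hi
      rw [hxe]; exact hx
    have hPnu : P ≠ Set.univ := by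
      intro hall
      obtain ⟨s0, hs0⟩ := hS
      obtain ⟨i, hi⟩ := hgsurj s0
      have hmem : i ∈ P := hall ▸ Set.mem_univ i
      obtain ⟨h, _⟩ := hmem
      rw [hi] at h
      exact h (by simpa using hs0)
    obtain ⟨i, hiP, hiP'⟩ := cyclic_boundary hPne hPnu
    refine ⟨i, hiP, ?_⟩
    by_contra hnot
    have hmem : g (i + 1) ∈ ((↑S : Set V)ᶜ) := by simpa using hnot
    apply hiP'
    obtain ⟨h, hC⟩ := hiP
    refine ⟨hmem, ?_⟩
    rw [← hC]
    apply ConnectedComponent.sound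
    have hadj' : (G.induce ((↑S : Set V)ᶜ)).Adj ⟨g (i+1), hmem⟩ ⟨g i, h⟩ :=
      (hadj i).symm
    exact hadj'.reachable
  choose bd hbd1 hbd2 using hbd
  have hinj2 : Function.Injective (fun C : CC => (⟨bd C + 1, hbd2 C⟩ : {i : Fin n // g i ∈ S})) := by
    intro C C' heq
    simp only [Subtype.mk.injEq] at heq
    have hbc : bd C = bd C' := add_right_cancel heq
    obtain ⟨h1, hC⟩ := hbd1 C
    obtain ⟨h2, hC'⟩ := hbd1 C'
    rw [← hC, ← hC']
    exact congrArg _ (Subtype.ext (congrArg g hbc))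
  have hle : Nat.card CC ≤ Nat.card {i : Fin n // g i ∈ S} :=
    Nat.card_le_card_of_injective _ hinj2
  have hcnt : Nat.card {i : Fin n // g i ∈ S} = S.card := by
    have e := (Equiv.ofBijective g hgbij).subtypeEquiv
      (fun i => Iff.rfl : ∀ i, g i ∈ S ↔ (Equiv.ofBijective g hgbij) i ∈ S)
    rw [Nat.card_congr e]
    rw [Nat.card_eq_fintype_card]
    exact Fintype.card_coe S
  calc compCount G S = Nat.card CC := rfl
    _ ≤ Nat.card {i : Fin n // g i ∈ S} := hle
    _ = S.card := hcnt

end Hamiltonian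

end RanTough

open RanTough

/-- If the clique-tree of a RAN contains two degree-4 vertices joined by a neat fat
path (either adjacent, or all internal vertices of the path have degree exactly 3),
then `τ(G) < 1` and `G` is non-Hamiltonian. -/
theorem ran_fatPath_toughness_lt_one {V : Type*} [Fintype V] [DecidableEq V]
    (G : SimpleGraph V) (hG : IsRAN G)
    (T : SimpleGraph {Q : Finset V // IsMaximalClique G Q}) (hT : IsCliqueTree G T)
    (qi qj : {Q : Finset V // IsMaximalClique G Q}) (hij : qi ≠ qj)
    (hqi : deg T qi = 4) (hqj : deg T qj = 4)
    (p : T.Walk qi qj) (hp : p.IsPath)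
    (hfat : p.length = 1 ∨
      ∀ q ∈ p.support, q ≠ qi → q ≠ qj → deg T q = 3) :
    toughness G < 1 ∧ ¬ G.IsHamiltonian := by
  obtain ⟨hK, -⟩ := hG
  have hdeg3 : ∀ q ∈ p.support, q ≠ qi → q ≠ qj → deg T q = 3 := by
    rcases hfat with hlen | h
    · intro q hq hq1 hq2
      exfalso
      obtain ⟨k, hk1, hk2⟩ := SimpleGraph.Walk.mem_support_iff_exists_getVert.mp hq
      rw [hlen] at hk2
      interval_cases k
      · exact hq1 (by rw [← hk1, SimpleGraph.Walk.getVert_zero])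
      · refine hq2 ?_
        rw [← hk1]
        have hgl := SimpleGraph.Walk.getVert_length p
        rw [hlen] at hgl
        exact hgl
    · exact h
  obtain ⟨S, hSne, h1, h2⟩ := main_sep hK hT hij hqi hqj p hp hdeg3
  constructor
  · have hc0 : compCount G S ≠ 0 := by omega
    have hub : toughness G ≤ (S.card : ℝ≥0∞) / (compCount G S : ℝ≥0∞) := by
      apply sSup_le
      intro t ht
      rw [ENNReal.le_div_iff_mul_le (Or.inl (by exact_mod_cast hc0))
        (Or.inl (ENNReal.natCast_ne_top _))]
      exact ht S h2
    refine lt_of_le_of_lt hub ?_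
    rw [ENNReal.div_lt_iff (Or.inl (by exact_mod_cast hc0))
        (Or.inl (ENNReal.natCast_ne_top _)), one_mul]
    exact_mod_cast h1
  · intro hham
    have hb := hamiltonian_compCount_le (by have := hK.1; omega) hham hSne
    omega
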